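/- For all integers Δ ≥ 2 and D ≥ 1 with Δ · D ≥ 3, there exists a 2-vertex connected finite simple graph G with diameter at most D + 2 containing a vertex u of degree exactly Δ, such that the graph G ∖ {u} is connected and has diameter at least Δ·D/2 − 1. (Consequently, in any private neighborhood trees collection for G, the tree T(u) must have diameter at least Δ·D/2 − 1, so the O(Δ·D) dilation bound for private neighborhood trees is existentially tight up to logarithmic factors.) -/

import Mathlib

open SimpleGraph

/-- A finite simple graph (on at least 3 vertices) is 2-vertex connected if it is connected
and deleting any single vertex leaves a connected graph. -/
def TwoVertexConnected {V : Type} (G : SimpleGraph V) : Prop :=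
  G.Connected ∧ ∀ u : V, (G.induce {v | v ≠ u}).Connected

namespace PTLB

variable (n D : ℕ)

/-- cycle graph on `ZMod n`. -/
def cyc [NeZero n] : SimpleGraph (ZMod n) where
  Adj i j := (i - j = 1 ∨ j - i = 1) ∧ i ≠ j
  symm := by constructor; rintro i j ⟨h, hne⟩; exact ⟨h.symm, hne.symm⟩
  loopless := by constructor; rintro i ⟨_, hne⟩; exact hne rfl

/-- wheel-like graph: cycle plus a hub adjacent to vertices with value divisible by `D`. -/
def wheel [NeZero n] : SimpleGraph (Option (ZMod n)) where
  Adj v w := match v, w with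
    | some i, some j => (i - j = 1 ∨ j - i = 1) ∧ i ≠ j
    | some i, none => i.val % D = 0
    | none, some j => j.val % D = 0
    | none, none => False
  symm := by
    constructor
    rintro (_|i) (_|j) h
    · exact h
    · exact h
    · exact h
    · exact ⟨h.1.symm, h.2.symm⟩
  loopless := by
    constructor
    rintro (_|i) h
    · exact h
    · exact h.2 rfl

variable {n D}

lemma one_ne_zero' (hn : 3 ≤ n) : (1 : ZMod n) ≠ 0 := by
  haveI : NeZero n := ⟨by omega⟩
  haveI : Fact (1 < n) := ⟨by omega⟩
  exact one_ne_zero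

lemma succ_ne (hn : 3 ≤ n) (i : ZMod n) : i ≠ i + 1 := fun h =>
  one_ne_zero' hn (by linear_combination -h)

section basic
variable [NeZero n]

lemma wheel_adj_ss {i j : ZMod n} :
    (wheel n D).Adj (some i) (some j) ↔ (i - j = 1 ∨ j - i = 1) ∧ i ≠ j := Iff.rfl

lemma wheel_adj_ns {j : ZMod n} : (wheel n D).Adj none (some j) ↔ j.val % D = 0 := Iff.rfl

lemma wheel_adj_sn {i : ZMod n} : (wheel n D).Adj (some i) none ↔ i.val % D = 0 := Iff.rfl

lemma cyc_adj_succ (hn : 3 ≤ n) (i : ZMod n) : (cyc n).Adj i (i + 1) :=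
  ⟨Or.inr (by ring), succ_ne hn i⟩

lemma wheel_adj_succ (hn : 3 ≤ n) (i : ZMod n) : (wheel n D).Adj (some i) (some (i + 1)) :=
  ⟨Or.inr (by ring), succ_ne hn i⟩

/-- reachability along the cycle -/
lemma cyc_reach (hn : 3 ≤ n) (i : ZMod n) (m : ℕ) : (cyc n).Reachable i (i + (m : ZMod n)) := by
  induction m with
  | zero => simpa using Reachable.refl i
  | succ m ih =>
    refine ih.trans (Adj.reachable ?_)
    have hc : ((m+1:ℕ) : ZMod n) = (m : ZMod n) + 1 := by push_cast; ring
    rw [hc, ← add_assoc]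
    exact cyc_adj_succ hn (i + (m : ZMod n))

/-- edist bound along the wheel cycle -/
lemma wheel_edist_add (hn : 3 ≤ n) (i : ZMod n) (m : ℕ) :
    (wheel n D).edist (some i) (some (i + (m : ZMod n))) ≤ m := by
  induction m with
  | zero => simp
  | succ m ih =>
    have hadj : (wheel n D).Adj (some (i + (m : ZMod n))) (some (i + ((m+1 : ℕ) : ZMod n))) := by
      have hc : ((m+1:ℕ) : ZMod n) = (m : ZMod n) + 1 := by push_cast; ring
      rw [hc, ← add_assoc]
      exact wheel_adj_succ hn (i + (m : ZMod n))
    calc (wheel n D).edist (some i) (some (i + ((m+1:ℕ) : ZMod n)))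
        ≤ (wheel n D).edist (some i) (some (i + (m : ZMod n))) +
          (wheel n D).edist (some (i + (m : ZMod n))) (some (i + ((m+1:ℕ) : ZMod n))) :=
          SimpleGraph.edist_triangle
      _ ≤ (m : ℕ∞) + 1 := by
          gcongr
          exact le_of_eq (edist_eq_one_iff_adj.mpr hadj)
      _ = ((m + 1 : ℕ) : ℕ∞) := by push_cast; ring

/-- every element is `i` plus a natural cast -/
lemma eq_add_val (i j : ZMod n) : j = i + (((j - i).val : ℕ) : ZMod n) := by
  rw [ZMod.natCast_rightInverse (j - i)]
  ring

lemma val_add_one_le (a : ZMod n) : (a + 1).val ≤ a.val + 1 := by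
  rcases eq_or_ne n 1 with rfl | h1
  · have := ZMod.val_lt (a + 1); omega
  · haveI : Fact (1 < n) := ⟨by have := NeZero.pos n; omega⟩
    rw [ZMod.val_add, ZMod.val_one]
    exact Nat.mod_le _ _

lemma val_sub_one (b : ZMod n) (hb : b ≠ 0) (hn : 3 ≤ n) : (b - 1).val = b.val - 1 := by
  haveI : Fact (1 < n) := ⟨by omega⟩
  have hb1 : 1 ≤ b.val := by
    rcases Nat.eq_zero_or_pos b.val with h | h
    · exact absurd (by rwa [← ZMod.val_eq_zero]) hb
    · exact h
  have hlt : b.val - 1 < n := by have := ZMod.val_lt b; omega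
  have : b - 1 = (((b.val - 1 : ℕ)) : ZMod n) := by
    have : ((b.val : ℕ) : ZMod n) = b := ZMod.natCast_rightInverse b
    push_cast [Nat.cast_sub hb1]
    rw [this]
  rw [this, ZMod.val_cast_of_lt hlt]

/-- lower bound for walks in the cycle -/
lemma cyc_walk_lb (hn : 3 ≤ n) {i j : ZMod n} (w : (cyc n).Walk i j) :
    min (i - j).val (j - i).val ≤ w.length := by
  induction w with
  | nil => simp
  | @cons i k j hadj p ih =>
    rw [SimpleGraph.Walk.length_cons]
    by_cases hjk : j = k
    · subst hjk
      rcases hadj.1 with h | h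
      · have : (i - j).val = 1 := by
          haveI : Fact (1 < n) := ⟨by omega⟩
          rw [h, ZMod.val_one]
        omega
      · have : (j - i).val = 1 := by
          haveI : Fact (1 < n) := ⟨by omega⟩
          rw [h, ZMod.val_one]
        omega
    · have hkj : k - j ≠ 0 := fun h => hjk (by linear_combination -h)
      have hjk' : j - k ≠ 0 := fun h => hjk (by linear_combination h)
      rcases hadj.1 with h | h
      · -- i = k + 1
        have e1 : i - j = (k - j) + 1 := by linear_combination h
        have e2 : j - i = (j - k) - 1 := by linear_combination -h
        have h1 : (i - j).val ≤ (k - j).val + 1 := e1 ▸ val_add_one_le _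
        have h2 : (j - i).val ≤ (j - k).val + 1 := by
          rw [e2, val_sub_one _ hjk' hn]; omega
        omega
      · -- k = i + 1
        have e1 : j - i = (j - k) + 1 := by linear_combination h
        have e2 : i - j = (k - j) - 1 := by linear_combination -h
        have h1 : (j - i).val ≤ (j - k).val + 1 := e1 ▸ val_add_one_le _
        have h2 : (i - j).val ≤ (k - j).val + 1 := by
          rw [e2, val_sub_one _ hkj hn]; omega
        omega

end basic

section main
variable [NeZero n]

lemma hub_val (hDn : D ∣ n) (hD : 1 ≤ D) {k : ℕ} (hk : D ∣ k) :
    ((k : ZMod n)).val % D = 0 := by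
  rw [ZMod.val_natCast]
  obtain ⟨c, hc⟩ := (Nat.dvd_mod_iff hDn).mpr hk
  rw [hc]
  exact Nat.mul_mod_right D c

/-- every non-hub vertex is within `D/2 + 1` of the hub -/
lemma wheel_edist_none (hn : 3 ≤ n) (hDn : D ∣ n) (hD : 1 ≤ D) (j : ZMod n) :
    (wheel n D).edist (some j) none ≤ ((D / 2 + 1 : ℕ) : ℕ∞) := by
  set r : ℕ := j.val % D with hr
  have hrD : r < D := Nat.mod_lt _ (by omega)
  have hrj : r ≤ j.val := Nat.mod_le _ _
  have hjval : ((j.val : ℕ) : ZMod n) = j := ZMod.natCast_rightInverse j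
  by_cases hcase : r ≤ D / 2
  · -- go down to the hub `j - r`
    have hhub : D ∣ j.val - r := by
      refine ⟨j.val / D, ?_⟩
      have h := Nat.mod_add_div j.val D
      omega
    have hcast : ((j.val - r : ℕ) : ZMod n) + ((r : ℕ) : ZMod n) = j := by
      rw [← Nat.cast_add, Nat.sub_add_cancel hrj, hjval]
    have h1 : (wheel n D).edist (some (((j.val - r : ℕ) : ZMod n))) (some j) ≤ (r : ℕ∞) := by
      have := wheel_edist_add (D := D) hn (((j.val - r : ℕ) : ZMod n)) r
      rwa [hcast] at this
    have h2 : (wheel n D).edist (some j) none ≤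
        (wheel n D).edist (some j) (some (((j.val - r : ℕ) : ZMod n))) + 1 := by
      have hadj : (wheel n D).Adj (some (((j.val - r : ℕ) : ZMod n))) none :=
        wheel_adj_sn.mpr (hub_val hDn hD hhub)
      calc (wheel n D).edist (some j) none
          ≤ (wheel n D).edist (some j) (some (((j.val - r : ℕ) : ZMod n))) +
            (wheel n D).edist (some (((j.val - r : ℕ) : ZMod n))) none :=
            SimpleGraph.edist_triangle
        _ ≤ _ := by gcongr; exact le_of_eq (edist_eq_one_iff_adj.mpr hadj)
    rw [SimpleGraph.edist_comm] at h1
    calc (wheel n D).edist (some j) none ≤ (r : ℕ∞) + 1 := le_trans h2 (by gcongr)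
      _ ≤ ((D / 2 + 1 : ℕ) : ℕ∞) := by
          push_cast
          gcongr
  · -- go up to the hub `j + (D - r)`
    set m : ℕ := D - r with hm
    have hmle : m ≤ D / 2 := by omega
    have hhub : D ∣ j.val + m := by
      have : j.val % D = r := hr.symm
      have : j.val + m = (j.val - r) + D := by omega
      rw [this]
      have hdvd : D ∣ j.val - r := by
        refine ⟨j.val / D, ?_⟩
        have h := Nat.mod_add_div j.val D
        omega
      exact Nat.dvd_add hdvd dvd_rfl
    have hcast : j + ((m : ℕ) : ZMod n) = (((j.val + m : ℕ) : ZMod n)) := by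
      rw [Nat.cast_add, hjval]
    have h1 : (wheel n D).edist (some j) (some (((j.val + m : ℕ) : ZMod n))) ≤ (m : ℕ∞) := by
      have := wheel_edist_add (D := D) hn j m
      rwa [hcast] at this
    have hadj : (wheel n D).Adj (some (((j.val + m : ℕ) : ZMod n))) none :=
      wheel_adj_sn.mpr (hub_val hDn hD hhub)
    calc (wheel n D).edist (some j) none
        ≤ (wheel n D).edist (some j) (some (((j.val + m : ℕ) : ZMod n))) +
          (wheel n D).edist (some (((j.val + m : ℕ) : ZMod n))) none :=
          SimpleGraph.edist_triangle
      _ ≤ (m : ℕ∞) + 1 := by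
          gcongr
          exact le_of_eq (edist_eq_one_iff_adj.mpr hadj)
      _ ≤ ((D / 2 + 1 : ℕ) : ℕ∞) := by
          push_cast
          gcongr

lemma wheel_ediam (hn : 3 ≤ n) (hDn : D ∣ n) (hD : 1 ≤ D) :
    (wheel n D).ediam ≤ ((D + 2 : ℕ) : ℕ∞) := by
  have key : ∀ v, (wheel n D).edist v none ≤ ((D / 2 + 1 : ℕ) : ℕ∞) := by
    rintro (_ | j)
    · simp
    · exact wheel_edist_none hn hDn hD j
  rw [SimpleGraph.ediam_le_iff]
  intro u v
  calc (wheel n D).edist u v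
      ≤ (wheel n D).edist u none + (wheel n D).edist none v := SimpleGraph.edist_triangle
    _ ≤ ((D / 2 + 1 : ℕ) : ℕ∞) + ((D / 2 + 1 : ℕ) : ℕ∞) := by
        gcongr
        · exact key u
        · rw [SimpleGraph.edist_comm]; exact key v
    _ ≤ ((D + 2 : ℕ) : ℕ∞) := by
        rw [← Nat.cast_add]
        exact Nat.cast_le.mpr (by omega)

lemma wheel_connected (hn : 3 ≤ n) (hDn : D ∣ n) (hD : 1 ≤ D) :
    (wheel n D).Connected := by
  rw [SimpleGraph.connected_iff]
  refine ⟨fun u v => ?_, ⟨none⟩⟩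
  apply SimpleGraph.reachable_of_edist_ne_top
  have h1 : (wheel n D).edist u v ≤ ((D + 2 : ℕ) : ℕ∞) :=
    le_trans SimpleGraph.edist_le_ediam (wheel_ediam hn hDn hD)
  intro h
  rw [h] at h1
  exact ENat.coe_ne_top _ (top_le_iff.mp h1)

variable (n D)

/-- embedding of cycle vertices into the wheel minus hub -/
def ι (i : ZMod n) : ↥{v : Option (ZMod n) | v ≠ none} := ⟨some i, by simp⟩

def ψ : cyc n →g (wheel n D).induce {v | v ≠ none} where
  toFun := ι n
  map_rel' := fun h => h

def φ : (wheel n D).induce {v | v ≠ none} →g cyc n where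
  toFun := fun a => a.1.get (Option.ne_none_iff_isSome.mp a.2)
  map_rel' := by
    rintro ⟨(_|i), ha⟩ ⟨(_|j), hb⟩ h
    · exact absurd rfl ha
    · exact absurd rfl ha
    · exact absurd rfl hb
    · exact h

variable {n D}

lemma rep_ne_none : ∀ a : ↥{v : Option (ZMod n) | v ≠ none}, ∃ i, a = ι n i := by
  rintro ⟨(_|i), ha⟩
  · exact absurd rfl ha
  · exact ⟨i, rfl⟩

lemma induced_none_connected (hn : 3 ≤ n) :
    ((wheel n D).induce {v | v ≠ none}).Connected := by
  rw [SimpleGraph.connected_iff]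
  refine ⟨fun a b => ?_, ⟨ι n 0⟩⟩
  obtain ⟨i, rfl⟩ := rep_ne_none a
  obtain ⟨j, rfl⟩ := rep_ne_none b
  have h : (cyc n).Reachable i j := by
    have := cyc_reach hn i ((j - i).val)
    rwa [← eq_add_val i j] at this
  exact h.map (ψ n D)

lemma induced_none_diam_lb (hn : 3 ≤ n) :
    n / 2 ≤ ((wheel n D).induce {v | v ≠ none}).diam := by
  set C := (wheel n D).induce {v | v ≠ none} with hC
  have hconn := induced_none_connected (D := D) hn
  haveI : Nonempty ↥{v : Option (ZMod n) | v ≠ none} := ⟨ι n 0⟩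
  have htop : C.ediam ≠ ⊤ := by
    obtain ⟨u, v, huv⟩ := SimpleGraph.exists_edist_eq_ediam_of_finite (G := C)
    rw [← huv]
    exact SimpleGraph.edist_ne_top_iff_reachable.mpr (hconn.preconnected u v)
  set M : ZMod n := ((n / 2 : ℕ) : ZMod n) with hM
  have hreach : C.Reachable (ι n 0) (ι n M) := by
    have h : (cyc n).Reachable 0 M := by
      have := cyc_reach hn 0 ((M - 0).val)
      rwa [← eq_add_val 0 M] at this
    exact h.map (ψ n D)
  obtain ⟨p, hp⟩ := hreach.exists_walk_length_eq_dist
  have hlb := cyc_walk_lb hn (p.map (φ n D))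
  rw [SimpleGraph.Walk.length_map, hp] at hlb
  have h0 : (φ n D) (ι n 0) = 0 := rfl
  have hM0 : (φ n D) (ι n M) = M := rfl
  rw [h0, hM0] at hlb
  have hv1 : (M - 0).val = n / 2 := by
    rw [sub_zero, hM]
    exact ZMod.val_cast_of_lt (by omega)
  have hv2 : (0 - M).val = n - n / 2 := by
    have he : (0 : ZMod n) - M = ((n - n / 2 : ℕ) : ZMod n) := by
      rw [Nat.cast_sub (Nat.div_le_self n 2), ZMod.natCast_self, hM]
    rw [he, ZMod.val_cast_of_lt (by omega)]
  rw [hv1, hv2] at hlb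
  have hd : n / 2 ≤ C.dist (ι n 0) (ι n M) := by omega
  exact le_trans hd (SimpleGraph.dist_le_diam htop)

lemma memt (hn : 3 ≤ n) (i : ZMod n) {t : ℕ} (h1 : 1 ≤ t) (h2 : t ≤ n - 1) :
    i + (t : ZMod n) ≠ i := by
  intro he
  have h0 : ((t : ℕ) : ZMod n) = 0 := by linear_combination he
  have hv : ((t : ℕ) : ZMod n).val = t := ZMod.val_cast_of_lt (by omega)
  rw [h0] at hv
  simp [ZMod.val_zero] at hv
  omega

lemma induced_some_connected (hn : 3 ≤ n) (hDn : D ∣ n) (hD : 1 ≤ D) (h2D : 2 * D ≤ n)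
    (i : ZMod n) : ((wheel n D).induce {v | v ≠ some i}).Connected := by
  set Gi := (wheel n D).induce {v | v ≠ some i} with hGi
  have hmemnone : (none : Option (ZMod n)) ∈ {v : Option (ZMod n) | v ≠ some i} := by simp
  have anchormem : (some (i + ((1:ℕ) : ZMod n)) : Option (ZMod n)) ∈
      {v : Option (ZMod n) | v ≠ some i} := by
    simpa using memt hn i (le_refl 1) (by omega)
  have key : ∀ t : ℕ,
      ∀ hmem : (some (i + (t : ZMod n)) : Option (ZMod n)) ∈ {v : Option (ZMod n) | v ≠ some i},
      1 ≤ t → t ≤ n - 1 →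
      Gi.Reachable ⟨some (i + ((1:ℕ) : ZMod n)), anchormem⟩ ⟨some (i + (t : ZMod n)), hmem⟩ := by
    intro t
    induction t with
    | zero => intro _ h; omega
    | succ t IH =>
      intro hmem h1 h2
      rcases Nat.lt_or_ge 1 (t + 1) with hgt | hle
      · have ht1 : 1 ≤ t := by omega
        have ht2 : t ≤ n - 1 := by omega
        have hmem' : (some (i + (t : ZMod n)) : Option (ZMod n)) ∈
            {v : Option (ZMod n) | v ≠ some i} := by
          simpa using memt hn i ht1 ht2
        refine (IH hmem' ht1 ht2).trans (SimpleGraph.Adj.reachable ?_)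
        show (wheel n D).Adj (some (i + (t : ZMod n))) (some (i + ((t + 1 : ℕ) : ZMod n)))
        have hc : ((t + 1 : ℕ) : ZMod n) = (t : ZMod n) + 1 := by push_cast; ring
        rw [hc, ← add_assoc]
        exact wheel_adj_succ hn _
      · have : t = 0 := by omega
        subst this
        exact SimpleGraph.Reachable.refl _
  rw [SimpleGraph.connected_iff]
  refine ⟨fun a b => ?_, ⟨⟨none, hmemnone⟩⟩⟩
  suffices H : ∀ v : ↥{v : Option (ZMod n) | v ≠ some i}, Gi.Reachable v ⟨none, hmemnone⟩ by
    exact (H a).trans (H b).symm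
  -- a hub different from i
  obtain ⟨hub, hubne, hubval⟩ : ∃ hub : ZMod n, hub ≠ i ∧ hub.val % D = 0 := by
    by_cases hi0 : i = 0
    · refine ⟨((D : ℕ) : ZMod n), ?_, hub_val hDn hD dvd_rfl⟩
      have hv : (((D : ℕ) : ZMod n)).val = D := ZMod.val_cast_of_lt (by omega)
      intro he
      rw [hi0] at he
      have : (((D : ℕ) : ZMod n)).val = 0 := by rw [he]; simp
      omega
    · exact ⟨0, fun h => hi0 h.symm, by simp⟩
  have reach_to_anchor : ∀ (j : ZMod n) (hj : j ≠ i)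
      (hmem : (some j : Option (ZMod n)) ∈ {v : Option (ZMod n) | v ≠ some i}),
      Gi.Reachable ⟨some j, hmem⟩ ⟨some (i + ((1:ℕ) : ZMod n)), anchormem⟩ := by
    intro j hj hmem
    set t : ℕ := (j - i).val with ht
    have ht1 : 1 ≤ t := by
      have : j - i ≠ 0 := sub_ne_zero.mpr hj
      have := (ZMod.val_eq_zero (j - i)).not.mpr this
      omega
    have ht2 : t ≤ n - 1 := by have := ZMod.val_lt (j - i); omega
    have hj2 : j = i + (t : ZMod n) := eq_add_val i j
    have hmem' : (some (i + (t : ZMod n)) : Option (ZMod n)) ∈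
        {v : Option (ZMod n) | v ≠ some i} := by simpa using memt hn i ht1 ht2
    have heq : (⟨some j, hmem⟩ : ↥{v : Option (ZMod n) | v ≠ some i}) =
        ⟨some (i + (t : ZMod n)), hmem'⟩ := Subtype.ext (congrArg some hj2)
    rw [heq]
    exact (key t hmem' ht1 ht2).symm
  rintro ⟨(_|j), hv⟩
  · exact SimpleGraph.Reachable.refl _
  · have hj : j ≠ i := fun h => hv (congrArg some h)
    have hubmem : (some hub : Option (ZMod n)) ∈ {v : Option (ZMod n) | v ≠ some i} := by
      simpa using hubne
    have r1 := reach_to_anchor j hj hv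
    have r2 := reach_to_anchor hub hubne hubmem
    have radj : Gi.Adj ⟨some hub, hubmem⟩ ⟨none, hmemnone⟩ := by
      show (wheel n D).Adj (some hub) none
      exact wheel_adj_sn.mpr hubval
    exact (r1.trans r2.symm).trans radj.reachable

lemma wheel_degree {Δ : ℕ} (hD : 1 ≤ D) (hΔ : 1 ≤ Δ) (hn : n = Δ * D) :
    ((wheel n D).neighborSet none).ncard = Δ := by
  have hset : (wheel n D).neighborSet none = some '' {j : ZMod n | j.val % D = 0} := by
    ext v
    cases v with
    | none =>
      constructor
      · intro h; exact h.elim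
      · rintro ⟨j, _, hj⟩; cases hj
    | some j =>
      constructor
      · intro h; exact ⟨j, h, rfl⟩
      · rintro ⟨j', hj', hjj⟩
        cases hjj
        exact hj'
  rw [hset, Set.ncard_image_of_injective _ (Option.some_injective _),
    ← Nat.card_coe_set_eq]
  have e : {j : ZMod n // j ∈ {j : ZMod n | j.val % D = 0}} ≃ Fin Δ :=
    { toFun := fun j => ⟨j.1.val / D, by
        have hlt := ZMod.val_lt j.1
        have hlt2 : j.1.val < Δ * D := by omega
        exact (Nat.div_lt_iff_lt_mul (by omega)).mpr hlt2⟩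
      invFun := fun k => ⟨((k.1 * D : ℕ) : ZMod n), by
        have hlt : k.1 * D < n := by
          rw [hn]; exact (Nat.mul_lt_mul_right (by omega)).mpr k.2
        show (((k.1 * D : ℕ) : ZMod n)).val % D = 0
        rw [ZMod.val_cast_of_lt hlt]
        exact Nat.mul_mod_left _ _⟩
      left_inv := fun j => by
        apply Subtype.ext
        have hdvd : D ∣ j.1.val := Nat.dvd_of_mod_eq_zero j.2
        show ((j.1.val / D * D : ℕ) : ZMod n) = j.1
        rw [Nat.div_mul_cancel hdvd]
        exact ZMod.natCast_rightInverse j.1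
      right_inv := fun k => by
        apply Fin.ext
        have hlt : k.1 * D < n := by
          rw [hn]; exact (Nat.mul_lt_mul_right (by omega)).mpr k.2
        show (((k.1 * D : ℕ) : ZMod n)).val / D = k.1
        rw [ZMod.val_cast_of_lt hlt]
        exact Nat.mul_div_cancel k.1 (by omega) }
  rw [Nat.card_congr e]
  simp

end main

end PTLB

/-- For all `Δ ≥ 2` and `D ≥ 1` with `Δ·D ≥ 3` there is a 2-vertex connected graph of
diameter at most `D + 2` with a vertex `u` of degree `Δ` such that `G \ {u}` is connected
of diameter at least `Δ·D/2 − 1`: the `O(Δ·D)` dilation bound for private neighborhood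
trees is existentially tight up to logarithmic factors. -/
theorem private_trees_dilation_lower_bound (Δ D : ℕ) (hΔ : 2 ≤ Δ) (hD : 1 ≤ D)
    (hΔD : 3 ≤ Δ * D) :
    ∃ (V : Type) (_ : Fintype V) (G : SimpleGraph V) (u : V),
      3 ≤ Fintype.card V ∧
      TwoVertexConnected G ∧
      G.diam ≤ D + 2 ∧
      (G.neighborSet u).ncard = Δ ∧
      (G.induce {v | v ≠ u}).Connected ∧
      ((Δ * D : ℝ) / 2 - 1 ≤ ((G.induce {v | v ≠ u}).diam : ℝ)) := by
  set n := Δ * D with hn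
  haveI : NeZero n := ⟨by omega⟩
  have hn3 : 3 ≤ n := hΔD
  have hDn : D ∣ n := dvd_mul_left D Δ
  have h2D : 2 * D ≤ n := Nat.mul_le_mul_right D hΔ
  refine ⟨Option (ZMod n), inferInstance, PTLB.wheel n D, none, ?_, ?_, ?_, ?_, ?_, ?_⟩
  · rw [Fintype.card_option, ZMod.card]
    omega
  · refine ⟨PTLB.wheel_connected hn3 hDn hD, fun u => ?_⟩
    cases u with
    | none => exact PTLB.induced_none_connected hn3
    | some i => exact PTLB.induced_some_connected hn3 hDn hD h2D i
  · have h := ENat.toNat_le_toNat (PTLB.wheel_ediam hn3 hDn hD) (ENat.coe_ne_top _)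
    exact h.trans_eq (ENat.toNat_coe _)
  · exact PTLB.wheel_degree hD (by omega) hn
  · exact PTLB.induced_none_connected hn3
  · have hlb := PTLB.induced_none_diam_lb (D := D) hn3
    have h2 : (n : ℝ) ≤ 2 * ((n / 2 : ℕ) : ℝ) + 1 := by
      have h : n ≤ 2 * (n / 2) + 1 := by omega
      exact_mod_cast h
    have h3 : ((n / 2 : ℕ) : ℝ) ≤
        ((((PTLB.wheel n D).induce {v | v ≠ none}).diam : ℕ) : ℝ) := Nat.cast_le.mpr hlb
    have h4 : ((Δ : ℝ) * D) = (n : ℝ) := by rw [hn]; push_cast; ring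
    linarith
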